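/- Let x ∈ X, α > 0, and let p ∈ H be the global minimum point of g_{α,x}. Then the function Φ : H → ℝ defined by Φ(h) = f_α(x + j h) is Fréchet differentiable at 0, with derivative the continuous linear functional h ↦ −(1/α)⟨p, h⟩_H. (That is, f_α is differentiable along H at every point x, with ∇_H f_α(x) = −(1/α) p.) -/

import Mathlib

/-- Differentiability along `H` of the Moreau–Yosida approximation: if `p` is the
global minimum point of `g_{α,x}`, then `h ↦ f_α(x + j h)` is Fréchet differentiable
at `0` with derivative `h ↦ -(1/α)⟨p, h⟩`, i.e. `∇_H f_α(x) = -(1/α) p`. -/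
theorem moreauYosida_hasFDerivAt {X H : Type*} [NormedAddCommGroup X]
    [NormedSpace ℝ X] [CompleteSpace X] [NormedAddCommGroup H]
    [InnerProductSpace ℝ H] [CompleteSpace H]
    (j : H →L[ℝ] X) (hj : Function.Injective j)
    (f : X → ℝ) (hconv : ConvexOn ℝ Set.univ f) (hlsc : LowerSemicontinuous f)
    (x : X) (α : ℝ) (hα : 0 < α) (p : H)
    (hp : ∀ h : H, f (x + j p) + ‖p‖ ^ 2 / (2 * α) ≤ f (x + j h) + ‖h‖ ^ 2 / (2 * α)) :
    HasFDerivAt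
      (fun h : H => ⨅ k : H, (f (x + j h + j k) + ‖k‖ ^ 2 / (2 * α)))
      ((-(1 / α)) • innerSL ℝ p) (0 : H) := by
  have h2α : (0:ℝ) < 2*α := by linarith
  -- translate additive inequalities between divided and cleared form
  have e : ∀ a u : ℝ, a + u/(2*α) = (2*α*a + u)/(2*α) := by
    intro a u; field_simp
  have hiff : ∀ a u b v : ℝ,
      (a + u/(2*α) ≤ b + v/(2*α)) ↔ (2*α*a + u ≤ 2*α*b + v) := by
    intro a u b v
    rw [e a u, e b v, div_le_div_iff_of_pos_right h2α]
  -- cleared form of minimality of p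
  have hp' : ∀ h : H, 2*α*f (x + j p) + ‖p‖^2 ≤ 2*α*f (x + j h) + ‖h‖^2 := by
    intro h; exact (hiff _ _ _ _).mp (hp h)
  -- strong minimality : f(x+jk) + ‖k‖²/(2α) ≥ M + ‖k-p‖²/(2α), cleared form
  have hstar : ∀ k : H, 2*α*f (x + j p) + ‖p‖^2 + ‖k - p‖^2
      ≤ 2*α*f (x + j k) + ‖k‖^2 := by
    intro k
    have key : ∀ t : ℝ, 0 < t → t ≤ 1 →
        0 ≤ 2*α*(f (x + j k) - f (x + j p)) + 2*(inner ℝ p (k-p) : ℝ) + t*‖k-p‖^2 := by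
      intro t ht ht1
      have hc := hconv.2 (Set.mem_univ (x + j p)) (Set.mem_univ (x + j k))
        (show (0:ℝ) ≤ 1 - t by linarith) ht.le (show (1:ℝ) - t + t = 1 by ring)
      have heq : (1-t) • (x + j p) + t • (x + j k) = x + j (p + t • (k - p)) := by
        rw [map_add, map_smul, map_sub]
        rw [smul_add, smul_add]
        module
      rw [heq] at hc
      have hmin := hp' (p + t • (k - p))
      have hnorm : ‖p + t • (k - p)‖^2
          = ‖p‖^2 + 2*t*(inner ℝ p (k-p) : ℝ) + t^2*‖k-p‖^2 := by
        rw [norm_add_sq_real, real_inner_smul_right, norm_smul, Real.norm_eq_abs,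
          abs_of_pos ht, mul_pow]
        ring
      rw [hnorm] at hmin
      rw [smul_eq_mul, smul_eq_mul] at hc
      have hc' := mul_le_mul_of_nonneg_left hc h2α.le
      have hG : 0 ≤ t * (2*α*(f (x + j k) - f (x + j p)) + 2*(inner ℝ p (k-p) : ℝ)
          + t*‖k-p‖^2) := by nlinarith [hmin, hc']
      nlinarith [hG, ht]
    have B0 : 0 ≤ 2*α*(f (x + j k) - f (x + j p)) + 2*(inner ℝ p (k-p) : ℝ) := by
      have : ∀ ε : ℝ, 0 < ε →
          0 ≤ 2*α*(f (x + j k) - f (x + j p)) + 2*(inner ℝ p (k-p) : ℝ) + ε := by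
        intro ε hε
        have hd : (0:ℝ) < ‖k-p‖^2 + 1 := by positivity
        have ht : 0 < min 1 (ε/(‖k-p‖^2+1)) := by
          apply lt_min one_pos; positivity
        have h1 := key _ ht (min_le_left _ _)
        have h2 : min 1 (ε/(‖k-p‖^2+1)) * ‖k-p‖^2 ≤ ε := by
          calc min 1 (ε/(‖k-p‖^2+1)) * ‖k-p‖^2
              ≤ (ε/(‖k-p‖^2+1)) * ‖k-p‖^2 := by
                apply mul_le_mul_of_nonneg_right (min_le_right _ _) (by positivity)
            _ ≤ ε := by
                rw [div_mul_eq_mul_div, div_le_iff₀ hd]; nlinarith [sq_nonneg ‖k-p‖]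
        linarith
      by_contra hB
      push_neg at hB
      have := this (-(2*α*(f (x + j k) - f (x + j p)) + 2*(inner ℝ p (k-p) : ℝ))/2)
        (by linarith)
      linarith
    have hexp : ‖k - p‖^2 = ‖k‖^2 - 2*(inner ℝ k p : ℝ) + ‖p‖^2 := by
      rw [norm_sub_sq_real]
    have hcomm : (inner ℝ p (k-p) : ℝ) = (inner ℝ k p : ℝ) - ‖p‖^2 := by
      rw [inner_sub_right, real_inner_self_eq_norm_sq, real_inner_comm]
    linarith [B0, hexp.ge, hexp.le]
  -- lower bound, cleared form
  have lb' : ∀ h k : H, 2*α*f (x + j p) + (‖p‖^2 - 2*(inner ℝ p h : ℝ))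
      ≤ 2*α*f (x + j h + j k) + ‖k‖^2 := by
    intro h k
    have h1 := hstar (h + k)
    have heq : x + j (h + k) = x + j h + j k := by rw [map_add, add_assoc]
    rw [heq] at h1
    have e1 : ‖h + k - p‖^2 = ‖h + k‖^2 - 2*(inner ℝ (h+k) p : ℝ) + ‖p‖^2 := by
      rw [norm_sub_sq_real]
    have e2 : (inner ℝ (h+k) p : ℝ) = (inner ℝ h p : ℝ) + (inner ℝ k p : ℝ) := by
      rw [inner_add_left]
    have e3 : ‖k - p‖^2 = ‖k‖^2 - 2*(inner ℝ k p : ℝ) + ‖p‖^2 := by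
      rw [norm_sub_sq_real]
    have e4 : (inner ℝ p h : ℝ) = (inner ℝ h p : ℝ) := real_inner_comm _ _
    nlinarith [h1, sq_nonneg ‖k - p‖, e3.ge]
  -- lower bound, divided form
  have lb : ∀ h k : H, f (x + j p) + (‖p‖^2 - 2*(inner ℝ p h : ℝ))/(2*α)
      ≤ f (x + j h + j k) + ‖k‖^2/(2*α) := by
    intro h k; exact (hiff _ _ _ _).mpr (lb' h k)
  -- the range is bounded below
  have bdd : ∀ h : H, BddBelow (Set.range fun k : H =>
      f (x + j h + j k) + ‖k‖^2/(2*α)) := by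
    intro h
    refine ⟨f (x + j p) + (‖p‖^2 - 2*(inner ℝ p h : ℝ))/(2*α), ?_⟩
    rintro y ⟨k, rfl⟩
    exact lb h k
  set Φ : H → ℝ := fun h : H => ⨅ k : H, (f (x + j h + j k) + ‖k‖^2/(2*α)) with hΦ
  -- value at 0
  have hΦ0 : Φ 0 = f (x + j p) + ‖p‖^2/(2*α) := by
    have h1 : Φ 0 = ⨅ k : H, (f (x + j 0 + j k) + ‖k‖^2/(2*α)) := rfl
    rw [h1]
    apply le_antisymm
    · exact le_trans (ciInf_le (bdd 0) p) (le_of_eq (by simp))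
    · apply le_ciInf
      intro k
      simp only [map_zero, add_zero]
      exact hp k
  -- lower estimate on Φ h
  have hlow : ∀ h : H, Φ 0 - (inner ℝ p h : ℝ)/α ≤ Φ h := by
    intro h
    apply le_ciInf
    intro k
    have h1 := lb h k
    have : Φ 0 - (inner ℝ p h : ℝ)/α
        = f (x + j p) + (‖p‖^2 - 2*(inner ℝ p h : ℝ))/(2*α) := by
      rw [hΦ0]; field_simp; ring
    linarith [h1, this.le, this.ge]
  -- upper estimate on Φ h
  have hup : ∀ h : H, Φ h ≤ Φ 0 - (inner ℝ p h : ℝ)/α + ‖h‖^2/(2*α) := by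
    intro h
    have h1 := ciInf_le (bdd h) (p - h)
    have heq : x + j h + j (p - h) = x + j p := by
      rw [map_sub]; abel
    rw [heq] at h1
    have e5 : ‖p - h‖^2 = ‖p‖^2 - 2*(inner ℝ p h : ℝ) + ‖h‖^2 := by
      rw [norm_sub_sq_real]
    have : f (x + j p) + ‖p - h‖^2/(2*α)
        = Φ 0 - (inner ℝ p h : ℝ)/α + ‖h‖^2/(2*α) := by
      rw [hΦ0, e5]; field_simp; ring
    linarith [h1, this.le]
  -- conclude
  rw [hasFDerivAt_iff_isLittleO_nhds_zero]
  rw [Asymptotics.isLittleO_iff]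
  intro c hc
  have hr : (0:ℝ) < 2*α*c := by positivity
  filter_upwards [Metric.ball_mem_nhds (0:H) hr] with h hh
  rw [Metric.mem_ball, dist_zero_right] at hh
  have hL : ((-(1/α)) • innerSL ℝ p) h = -(1/α) * (inner ℝ p h : ℝ) := by
    simp
  have h1 := hlow h
  have h2 := hup h
  simp only [zero_add]
  rw [hL, Real.norm_eq_abs, abs_le]
  have hnn : (0:ℝ) ≤ ‖h‖ := norm_nonneg h
  have hbound : ‖h‖^2/(2*α) ≤ c*‖h‖ := by
    rw [div_le_iff₀ h2α]
    nlinarith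
  constructor
  · have : -(1/α) * (inner ℝ p h : ℝ) = -((inner ℝ p h : ℝ)/α) := by ring
    nlinarith [h1, hnn, mul_nonneg hc.le hnn]
  · have h3 : Φ h - Φ 0 - (-(1/α) * (inner ℝ p h : ℝ)) ≤ ‖h‖^2/(2*α) := by
      have : -(1/α) * (inner ℝ p h : ℝ) = -((inner ℝ p h : ℝ)/α) := by ring
      rw [this]; linarith
    linarith [h3, hbound]
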